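/- Let n ≥ 2. [EXT] holds if and only if for every f ∈ S and every r ∈ (0,1) the rescaled map f_r belongs to S¹. -/

import Mathlib

open Set Metric Filter

noncomputable section

/-- `E n` is `ℂⁿ` with the Euclidean norm. -/
abbrev E (n : ℕ) := EuclideanSpace ℂ (Fin n)

/-- A map is univalent on `D` if it is holomorphic and injective on `D`. -/
def Univalent {n : ℕ} (f : E n → E n) (D : Set (E n)) : Prop :=
  DifferentiableOn ℂ f D ∧ Set.InjOn f D

/-- The class `S` of normalized univalent maps of the unit ball. -/
def classS (n : ℕ) : Set (E n → E n) :=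
  {f | Univalent f (ball 0 1) ∧ f 0 = 0 ∧
    fderiv ℂ f 0 = ContinuousLinearMap.id ℂ (E n)}

/-- The class `S(ℂⁿ)` of normalized entire univalent maps. -/
def classSC (n : ℕ) : Set (E n → E n) :=
  {Ψ | Differentiable ℂ Ψ ∧ Function.Injective Ψ ∧ Ψ 0 = 0 ∧
    fderiv ℂ Ψ 0 = ContinuousLinearMap.id ℂ (E n)}

/-- A normalized Loewner chain on the unit ball. -/
def IsLoewnerChain {n : ℕ} (f : ℝ → E n → E n) : Prop :=
  ContinuousOn (fun p : ℝ × E n => f p.1 p.2) (Ici 0 ×ˢ ball 0 1) ∧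
  (∀ t, 0 ≤ t → Univalent (f t) (ball 0 1)) ∧
  (∀ s t, 0 ≤ s → s ≤ t → f s '' ball 0 1 ⊆ f t '' ball 0 1) ∧
  (∀ t, 0 ≤ t → f t 0 = 0 ∧
    fderiv ℂ (f t) 0 = (Real.exp t : ℂ) • ContinuousLinearMap.id ℂ (E n))

/-- The class `S¹` of maps embedding into a normalized Loewner chain. -/
def classS1 (n : ℕ) : Set (E n → E n) :=
  {f | f ∈ classS n ∧ ∃ F : ℝ → E n → E n, IsLoewnerChain F ∧
    Set.EqOn (F 0) f (ball 0 1)}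

/-- Uniform convergence on all compact subsets of `D`. -/
def ConvUnifOnCompacts {α β : Type*} [TopologicalSpace α] [UniformSpace β]
    (F : ℕ → α → β) (f : α → β) (D : Set α) : Prop :=
  ∀ K, K ⊆ D → IsCompact K → TendstoUniformlyOn F f atTop K

/-- `(D, Ω)` is a Runge pair. -/
def RungePair {n : ℕ} (D Ω : Set (E n)) : Prop :=
  D ⊆ Ω ∧ ∀ h : E n → ℂ, DifferentiableOn ℂ h D →
    ∃ g : ℕ → E n → ℂ, (∀ k, DifferentiableOn ℂ (g k) Ω) ∧
      ConvUnifOnCompacts g h D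

/-- `D` is Runge in `ℂⁿ`. -/
def IsRunge {n : ℕ} (D : Set (E n)) : Prop := RungePair D univ

/-- An automorphism of `ℂⁿ`. -/
def IsAutomorphism {n : ℕ} (Φ : E n → E n) : Prop :=
  Differentiable ℂ Φ ∧ Function.Bijective Φ

/-- A normalized automorphism of `ℂⁿ`. -/
def IsNormalizedAutomorphism {n : ℕ} (Φ : E n → E n) : Prop :=
  IsAutomorphism Φ ∧ Φ 0 = 0 ∧ fderiv ℂ Φ 0 = ContinuousLinearMap.id ℂ (E n)

/-- `Ω` is biholomorphic to `ℂⁿ`. -/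
def BiholToCn {n : ℕ} (Ω : Set (E n)) : Prop :=
  ∃ Ψ : E n → E n, Differentiable ℂ Ψ ∧ Function.Injective Ψ ∧ Set.range Ψ = Ω

/-- A Fatou–Bieberbach domain: a proper subdomain of `ℂⁿ` biholomorphic to `ℂⁿ`. -/
def IsFatouBieberbach {n : ℕ} (Ω : Set (E n)) : Prop :=
  Ω ≠ univ ∧ BiholToCn Ω

/-- The rescaling `f_r(z) = (1/r) f (r z)`. -/
def rescale {n : ℕ} (f : E n → E n) (r : ℝ) (z : E n) : E n :=
  (r : ℂ)⁻¹ • f ((r : ℂ) • z)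

/-- The Loewner range of a chain. -/
def LoewnerRange {n : ℕ} (f : ℝ → E n → E n) : Set (E n) :=
  ⋃ u ∈ Ici (0 : ℝ), f u '' ball 0 1

/-- (AL): the Andersén–Lempert approximation theorem for maps in `S` with Runge image. -/
def AL (n : ℕ) : Prop :=
  ∀ f ∈ classS n, IsRunge (f '' ball 0 1) →
    ∃ Φ : ℕ → E n → E n, (∀ k, IsNormalizedAutomorphism (Φ k)) ∧
      ConvUnifOnCompacts Φ f (ball (0 : E n) 1)

/-- (AL'): every univalent map of the ball with Runge image is approximable by
automorphisms of `ℂⁿ`. -/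
def AL' (n : ℕ) : Prop :=
  ∀ g : E n → E n, Univalent g (ball 0 1) → IsRunge (g '' ball 0 1) →
    ∃ Φ : ℕ → E n → E n, (∀ k, IsAutomorphism (Φ k)) ∧
      ConvUnifOnCompacts Φ g (ball (0 : E n) 1)

/-- (AL-nec): a map in `S` approximable by automorphisms of `ℂⁿ` has Runge image. -/
def ALnec (n : ℕ) : Prop :=
  ∀ f ∈ classS n,
    (∃ Φ : ℕ → E n → E n, (∀ k, IsAutomorphism (Φ k)) ∧
      ConvUnifOnCompacts Φ f (ball (0 : E n) 1)) →
    IsRunge (f '' ball 0 1)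

/-- [GAL]: every `f ∈ S` with non-Runge image is approximable by entire univalent maps. -/
def GAL (n : ℕ) : Prop :=
  ∀ f ∈ classS n, ¬ IsRunge (f '' ball 0 1) →
    ∃ Ψ : ℕ → E n → E n, (∀ k, Differentiable ℂ (Ψ k) ∧ Function.Injective (Ψ k)) ∧
      ConvUnifOnCompacts Ψ f (ball (0 : E n) 1)

/-- [EXT]: every `f ∈ S` extending univalently past the closed ball is in `S¹`. -/
def EXT (n : ℕ) : Prop :=
  ∀ f ∈ classS n,
    (∃ r > (1 : ℝ), ∃ F : E n → E n, Univalent F (ball 0 r) ∧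
      Set.EqOn F f (ball 0 1)) →
    f ∈ classS1 n

/-- [FBR]: every domain biholomorphic to the ball and not Runge in `ℂⁿ` sits in a
Fatou–Bieberbach domain in a Runge way. -/
def FBR (n : ℕ) : Prop :=
  ∀ D : Set (E n), IsOpen D →
    (∃ g : E n → E n, Univalent g (ball 0 1) ∧ g '' ball 0 1 = D) →
    ¬ IsRunge D →
    ∃ Ω : Set (E n), IsFatouBieberbach Ω ∧ D ⊆ Ω ∧ RungePair D Ω

/-- [GALˢ]: strong generalized Andersén–Lempert. -/
def GALs (n : ℕ) : Prop :=
  ∀ f ∈ classS n, ¬ IsRunge (f '' ball 0 1) →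
    ∃ Ω : Set (E n), IsFatouBieberbach Ω ∧
      ∃ Ψ : ℕ → E n → E n, (∀ k, Ψ k ∈ classSC n ∧ Set.range (Ψ k) = Ω) ∧
        ConvUnifOnCompacts Ψ f (ball (0 : E n) 1)

/-- [FBRₐ]. -/
def FBRa (n : ℕ) : Prop :=
  ∀ f ∈ classS n, ∀ r ∈ Ioo (0 : ℝ) 1,
    ∃ Ω : Set (E n), BiholToCn Ω ∧ f '' ball 0 r ⊆ Ω ∧
      RungePair (f '' ball 0 r) Ω

/-- [GALₐˢ]. -/
def GALas (n : ℕ) : Prop :=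
  ∀ f ∈ classS n, ¬ IsRunge (f '' ball 0 1) → ∀ r ∈ Ioo (0 : ℝ) 1,
    ∃ Ω : Set (E n), IsFatouBieberbach Ω ∧
      ∃ Ψ : ℕ → E n → E n, (∀ k, Ψ k ∈ classSC n ∧ Set.range (Ψ k) = Ω) ∧
        ConvUnifOnCompacts Ψ (rescale f r) (ball (0 : E n) 1)

/-- A domain is entire-convexshapelike if some entire univalent map pulls it back to
a convex set. -/
def EntireConvexshapelike {n : ℕ} (Ω : Set (E n)) : Prop :=
  ∃ Ψ : E n → E n, Differentiable ℂ Ψ ∧ Function.Injective Ψ ∧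
    Ω ⊆ Set.range Ψ ∧ Convex ℝ (Ψ ⁻¹' Ω)

/-- `S¹` is dense in `S` for uniform convergence on compacta. -/
def DenseS1 (n : ℕ) : Prop :=
  ∀ f ∈ classS n, ∃ g : ℕ → E n → E n, (∀ k, g k ∈ classS1 n) ∧
    ConvUnifOnCompacts g f (ball (0 : E n) 1)
lemma univalent_rescale {n : ℕ} {f : E n → E n} {a : ℝ} (hf : Univalent f (ball 0 a))
    {c : ℝ} (hc : 0 < c) : Univalent (rescale f c) (ball 0 (a / c)) := by
  have hmap : ∀ z ∈ ball (0 : E n) (a / c), (c : ℂ) • z ∈ ball (0 : E n) a := by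
    intro z hz
    rw [mem_ball_zero_iff] at hz ⊢
    rw [norm_smul]
    have : ‖(c : ℂ)‖ = c := by simp [abs_of_pos hc]
    rw [this]
    calc c * ‖z‖ < c * (a / c) := by exact mul_lt_mul_of_pos_left hz hc
      _ = a := by field_simp
  constructor
  · intro z hz
    have h1 : DifferentiableWithinAt ℂ (fun z : E n => f ((c : ℂ) • z)) (ball 0 (a / c)) z := by
      have := (hf.1 _ (hmap z hz)).comp z
        (DifferentiableWithinAt.const_smul (differentiableWithinAt_id) ((c : ℂ)))
        (fun w hw => hmap w hw)
      exact this
    exact h1.const_smul ((c : ℂ)⁻¹)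
  · intro z hz w hw h
    have hc' : (c : ℂ) ≠ 0 := by exact_mod_cast hc.ne'
    have h2 : f ((c : ℂ) • z) = f ((c : ℂ) • w) := by
      have := congrArg (fun x => (c : ℂ) • x) h
      simpa [rescale, smul_smul, mul_inv_cancel₀ hc'] using this
    have h3 := hf.2 (hmap z hz) (hmap w hw) h2
    have h4 := congrArg (fun x => (c : ℂ)⁻¹ • x) h3
    simp only [smul_smul, inv_mul_cancel₀ hc', one_smul] at h4
    exact h4

lemma hasFDerivAt_rescale {n : ℕ} {f : E n → E n}
    (hf : HasFDerivAt f (ContinuousLinearMap.id ℂ (E n)) 0) {c : ℝ} (hc : c ≠ 0) :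
    HasFDerivAt (rescale f c) (ContinuousLinearMap.id ℂ (E n)) 0 := by
  have hc' : (c : ℂ) ≠ 0 := by exact_mod_cast hc
  have hlin : HasFDerivAt (fun z : E n => (c : ℂ) • z)
      ((c : ℂ) • ContinuousLinearMap.id ℂ (E n)) 0 := by
    exact ((c : ℂ) • ContinuousLinearMap.id ℂ (E n)).hasFDerivAt (x := (0 : E n))
  have hcomp : HasFDerivAt (fun z : E n => f ((c : ℂ) • z))
      ((ContinuousLinearMap.id ℂ (E n)).comp ((c : ℂ) • ContinuousLinearMap.id ℂ (E n))) 0 := by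
    refine HasFDerivAt.comp 0 ?_ hlin
    simpa using hf
  have := hcomp.const_smul ((c : ℂ)⁻¹)
  refine this.congr_fderiv ?_
  ext z
  simp [smul_smul, ← mul_assoc, inv_mul_cancel₀ hc']

lemma mem_classS1_of_eqOn {n : ℕ} {h f : E n → E n} (hh : h ∈ classS1 n)
    (hf : f ∈ classS n) (he : Set.EqOn h f (ball 0 1)) : f ∈ classS1 n := by
  obtain ⟨-, F, hF, hFe⟩ := hh
  exact ⟨hf, F, hF, hFe.trans he⟩

theorem stmt5 (n : ℕ) (hn : 2 ≤ n) :
    EXT n ↔ ∀ f ∈ classS n, ∀ r ∈ Ioo (0 : ℝ) 1, rescale f r ∈ classS1 n := by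
  constructor
  · intro hext f hf r hr
    obtain ⟨hr0, hr1⟩ := hr
    have hru : Univalent (rescale f r) (ball 0 (1 / r)) := by
      simpa using univalent_rescale hf.1 hr0
    have h1r : 1 < 1 / r := by rw [lt_div_iff₀ hr0]; linarith
    have hsub : ball (0 : E n) 1 ⊆ ball 0 (1 / r) := ball_subset_ball h1r.le
    have hd0 : HasFDerivAt f (ContinuousLinearMap.id ℂ (E n)) 0 := by
      have := (hf.1.1.differentiableAt
        (isOpen_ball.mem_nhds (mem_ball_self one_pos))).hasFDerivAt
      rwa [hf.2.2] at this
    have hrs : HasFDerivAt (rescale f r) (ContinuousLinearMap.id ℂ (E n)) 0 :=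
      hasFDerivAt_rescale hd0 hr0.ne'
    have hmem : rescale f r ∈ classS n := by
      refine ⟨⟨hru.1.mono hsub, hru.2.mono hsub⟩, ?_, hrs.fderiv⟩
      simp [rescale, hf.2.1]
    exact hext _ hmem ⟨1 / r, h1r, rescale f r, hru, fun z _ => rfl⟩
  · rintro H f hf ⟨ρ, hρ, F, hFu, hFe⟩
    set s : ℝ := 2 / (ρ + 1) with hs_def
    have hρ1 : (0 : ℝ) < ρ + 1 := by linarith
    have hs0 : 0 < s := by positivity
    have hs1 : s < 1 := by
      rw [hs_def, div_lt_one hρ1]; linarith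
    have hsC : (s : ℂ) ≠ 0 := by exact_mod_cast hs0.ne'
    have hs0' : (0 : ℝ) < 1 / s := by positivity
    -- F at 0
    have hd0 : HasFDerivAt f (ContinuousLinearMap.id ℂ (E n)) 0 := by
      have := (hf.1.1.differentiableAt
        (isOpen_ball.mem_nhds (mem_ball_self one_pos))).hasFDerivAt
      rwa [hf.2.2] at this
    have hFev : F =ᶠ[nhds (0 : E n)] f :=
      Filter.eventuallyEq_of_mem (isOpen_ball.mem_nhds (mem_ball_self one_pos)) hFe
    have hFd0 : HasFDerivAt F (ContinuousLinearMap.id ℂ (E n)) 0 :=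
      hd0.congr_of_eventuallyEq hFev
    have hF0 : F 0 = 0 := by
      have := hFe (by simp : (0 : E n) ∈ ball 0 1)
      rw [this, hf.2.1]
    -- g := rescale F (1/s)
    set g : E n → E n := rescale F (1 / s) with hg_def
    have hgu : Univalent g (ball 0 (ρ / (1 / s))) := univalent_rescale hFu hs0'
    have hρs : 1 ≤ ρ / (1 / s) := by
      have hds : ρ / (1 / s) = ρ * s := by field_simp
      rw [hds, hs_def, ← mul_div_assoc, le_div_iff₀ hρ1]
      nlinarith
    have hsub : ball (0 : E n) 1 ⊆ ball 0 (ρ / (1 / s)) := ball_subset_ball hρs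
    have hgd : HasFDerivAt g (ContinuousLinearMap.id ℂ (E n)) 0 :=
      hasFDerivAt_rescale hFd0 hs0'.ne'
    have hgmem : g ∈ classS n := by
      refine ⟨⟨hgu.1.mono hsub, hgu.2.mono hsub⟩, ?_, hgd.fderiv⟩
      simp [hg_def, rescale, hF0]
    have hkey : rescale g s ∈ classS1 n := H g hgmem s ⟨hs0, hs1⟩
    have heq : Set.EqOn (rescale g s) f (ball 0 1) := by
      intro z hz
      have h1 : rescale g s z = F z := by
        simp only [hg_def, rescale, one_div, Complex.ofReal_inv, inv_inv, smul_smul]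
        rw [inv_mul_cancel₀ hsC]
        simp
      rw [h1, hFe hz]
    exact mem_classS1_of_eqOn hkey hf heq
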